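/- Let K be a field and F ∈ K[x]^{n×n} be nonsingular and column reduced with column degrees d and d_max = max_j d_j ≥ 1; let H be its Hermite normal form with diagonal degrees s = (s_1,…,s_n), s_max = max_i s_i, and u = (s_max,…,s_max) ∈ ℤ^n. For each i set q_i = ⌊s_i/d_max⌋ and r_i = s_i − q_i·d_max; let n̄ = n + Σ_i q_i, let E ∈ K[x]^{n×n̄} be the matrix [Ẽ_1,…,Ẽ_n] where Ẽ_i = [e_i, x^{s_i−q_i·d_max}·e_i, …, x^{s_i−d_max}·e_i] (q_i+1 columns, e_i the i-th standard basis column), and let s* ∈ ℤ^{n̄} be the concatenation over i of the q_i+1 entries (r_i, d_max, …, d_max). Suppose N ∈ K[x]^{(n+n̄)×n̄} is a [−u,−s*]-minimal kernel basis of the n×(n+n̄) matrix [F, −E], partitioned as N = [N_u; N_d] with N_d of dimension n̄×n̄, and let N̄ be the submatrix of the columns of N_d whose −s*-column degrees are at most 0. Then H is a column basis of E·N̄, and the nonzero columns of E·N̄ have −s-column degrees equal to 0. -/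

import Mathlib

open Polynomial Matrix

variable {K : Type*} [Field K]

/-- The degree of a polynomial, as an element of `WithBot ℤ` (`⊥` for the zero polynomial). -/
noncomputable def degZ (p : Polynomial K) : WithBot ℤ :=
  p.degree.map fun n : ℕ => (n : ℤ)

/-- The shifted column degree `cdeg_u p = max_i (deg p_i + u_i)` of a vector of polynomials. -/
noncomputable def cdegS {m : Type*} [Fintype m] (u : m → ℤ) (p : m → Polynomial K) : WithBot ℤ :=
  Finset.univ.sup fun i => degZ (p i) + (u i : WithBot ℤ)

/-- The row degree of row `i` of a polynomial matrix. -/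
noncomputable def rdeg {m n : Type*} [Fintype n] (P : Matrix m n (Polynomial K)) (i : m) :
    WithBot ℕ :=
  Finset.univ.sup fun j => (P i j).degree

/-- The shifted leading coefficient matrix `lcoeff (x^u · A · x^{-v})`. -/
noncomputable def lcoeffS {m n : Type*} (u : m → ℤ) (A : Matrix m n (Polynomial K)) (v : n → ℤ) :
    Matrix m n K :=
  Matrix.of fun i j => if 0 ≤ v j - u i then (A i j).coeff (v j - u i).toNat else 0

/-- A matrix over `K` has full column rank if its columns are linearly independent over `K`. -/
def FullColRankK {m n : Type*} (M : Matrix m n K) : Prop :=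
  LinearIndependent K fun j => fun i => M i j

/-- `A` is `u`-column reduced with `u`-column degrees `v`. -/
def IsColReducedWith {m n : Type*} [Fintype m] (u : m → ℤ) (A : Matrix m n (Polynomial K))
    (v : n → ℤ) : Prop :=
  (∀ j, cdegS u (fun i => A i j) = (v j : WithBot ℤ)) ∧ FullColRankK (lcoeffS u A v)

/-- `A` is `u`-column reduced. -/
def IsColReducedS {m n : Type*} [Fintype m] (u : m → ℤ) (A : Matrix m n (Polynomial K)) : Prop :=
  ∃ v : n → ℤ, IsColReducedWith u A v

/-- `F` is column reduced with (ordinary) column degrees `d`. -/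
def IsColReducedNat {m n : Type*} [Fintype m] (F : Matrix m n (Polynomial K)) (d : n → ℕ) : Prop :=
  IsColReducedWith (fun _ => (0 : ℤ)) F (fun j => (d j : ℤ))

/-- `N` is a (right) kernel basis of `F`. -/
def IsKernelBasis {m n k : Type*} [Fintype n] [Fintype k] (F : Matrix m n (Polynomial K))
    (N : Matrix n k (Polynomial K)) : Prop :=
  (LinearIndependent (Polynomial K) fun j => fun i => N i j) ∧
  F * N = 0 ∧
  ∀ q : n → Polynomial K, F.mulVec q = 0 → ∃ p : k → Polynomial K, N.mulVec p = q

/-- `N` is an `s`-minimal kernel basis of `F`. -/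
def IsMinimalKernelBasis {m n k : Type*} [Fintype n] [Fintype k] (F : Matrix m n (Polynomial K))
    (s : n → ℤ) (N : Matrix n k (Polynomial K)) : Prop :=
  IsKernelBasis F N ∧ IsColReducedS s N

/-- `T` is a column basis of `F`. -/
def IsColBasis {m n r : Type*} [Fintype n] [Fintype r] (F : Matrix m n (Polynomial K))
    (T : Matrix m r (Polynomial K)) : Prop :=
  (LinearIndependent (Polynomial K) fun j => fun i => T i j) ∧
  ∀ q : m → Polynomial K, (∃ p, F.mulVec p = q) ↔ (∃ p, T.mulVec p = q)

/-- `H` is in (column) Hermite normal form. -/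
def IsHermiteForm {n : ℕ} (H : Matrix (Fin n) (Fin n) (Polynomial K)) : Prop :=
  (∀ i j : Fin n, i < j → H i j = 0) ∧
  (∀ i : Fin n, (H i i).Monic) ∧
  (∀ i j : Fin n, j < i → (H i j).degree < (H i i).degree)

/-- `H` is the Hermite normal form of `F`. -/
def IsHermiteFormOf {n : ℕ} (F H : Matrix (Fin n) (Fin n) (Polynomial K)) : Prop :=
  IsHermiteForm H ∧ ∃ U : Matrix (Fin n) (Fin n) (Polynomial K), IsUnit U.det ∧ F * U = H

attribute [local instance] Classical.propDecidable


section Helpers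

lemma degZ_zero : degZ (0 : Polynomial K) = ⊥ := by simp [degZ]

lemma degZ_eq_natDegree {p : Polynomial K} (hp : p ≠ 0) :
    degZ p = ((p.natDegree : ℤ) : WithBot ℤ) := by
  simp [degZ, Polynomial.degree_eq_natDegree hp]

lemma degZ_le_coe_iff {p : Polynomial K} {m : ℤ} :
    degZ p ≤ (m : WithBot ℤ) ↔ ∀ k : ℕ, m < (k : ℤ) → p.coeff k = 0 := by
  by_cases hp : p = 0
  · simp [hp, degZ_zero]
  · rw [degZ_eq_natDegree hp, WithBot.coe_le_coe]
    constructor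
    · intro h k hk
      exact Polynomial.coeff_eq_zero_of_natDegree_lt (by exact_mod_cast h.trans_lt hk)
    · intro h
      by_contra hlt
      push_neg at hlt
      exact Polynomial.leadingCoeff_ne_zero.mpr hp (h p.natDegree hlt)

lemma le_degZ_of_coeff_ne {p : Polynomial K} {k : ℕ} (h : p.coeff k ≠ 0) :
    ((k : ℤ) : WithBot ℤ) ≤ degZ p := by
  have hp : p ≠ 0 := fun h0 => h (by simp [h0])
  rw [degZ_eq_natDegree hp, WithBot.coe_le_coe]
  exact_mod_cast Polynomial.le_natDegree_of_ne_zero h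

lemma eq_zero_of_degZ_le_neg {p : Polynomial K} {m : ℤ} (hm : m < 0)
    (h : degZ p ≤ (m : WithBot ℤ)) : p = 0 := by
  by_contra hp
  rw [degZ_eq_natDegree hp, WithBot.coe_le_coe] at h
  omega

lemma degZ_add_coe_le_iff {p : Polynomial K} {a b : ℤ} :
    degZ p + (a : WithBot ℤ) ≤ (b : WithBot ℤ) ↔ degZ p ≤ ((b - a : ℤ) : WithBot ℤ) := by
  by_cases hp : p = 0
  · simp [hp, degZ_zero]
  · rw [degZ_eq_natDegree hp, ← WithBot.coe_add, WithBot.coe_le_coe, WithBot.coe_le_coe]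
    omega

lemma degZ_coe_mono {a b : ℤ} (h : a ≤ b) : ((a : ℤ) : WithBot ℤ) ≤ ((b : ℤ) : WithBot ℤ) :=
  WithBot.coe_le_coe.mpr h

lemma degZ_mul {p q : Polynomial K} : degZ (p * q) = degZ p + degZ q := by
  by_cases hp : p = 0
  · simp [hp, degZ_zero]
  by_cases hq : q = 0
  · simp [hq, degZ_zero]
  rw [degZ_eq_natDegree hp, degZ_eq_natDegree hq, degZ_eq_natDegree (mul_ne_zero hp hq),
    Polynomial.natDegree_mul hp hq, ← WithBot.coe_add]
  push_cast
  rfl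

lemma degZ_X_pow_mul_le {p : Polynomial K} {e : ℕ} {b : ℤ}
    (h : degZ p ≤ (b : WithBot ℤ)) :
    degZ ((Polynomial.X ^ e : Polynomial K) * p) ≤ ((e + b : ℤ) : WithBot ℤ) := by
  rw [degZ_mul]
  have hx : degZ (Polynomial.X ^ e : Polynomial K) = ((e : ℤ) : WithBot ℤ) := by
    rw [degZ_eq_natDegree (pow_ne_zero e Polynomial.X_ne_zero : (Polynomial.X ^ e : Polynomial K) ≠ 0)]
    simp
  rw [hx, WithBot.coe_add]
  exact add_le_add_right h _

lemma degZ_le_degZ {p q : Polynomial K} (h : p.degree ≤ q.degree) : degZ p ≤ degZ q := by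
  by_cases hp : p = 0
  · simp [hp, degZ_zero]
  · have hq : q ≠ 0 := by
      intro h0
      apply hp
      rw [← Polynomial.degree_eq_bot]
      simpa [h0] using h
    rw [degZ_eq_natDegree hp, degZ_eq_natDegree hq, WithBot.coe_le_coe]
    exact_mod_cast Polynomial.natDegree_le_natDegree h

lemma degZ_sum_le {ι : Type*} {s : Finset ι} {f : ι → Polynomial K} {m : ℤ}
    (h : ∀ b ∈ s, degZ (f b) ≤ (m : WithBot ℤ)) :
    degZ (∑ b ∈ s, f b) ≤ (m : WithBot ℤ) := by
  rw [degZ_le_coe_iff]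
  intro k hk
  rw [Polynomial.finset_sum_coeff]
  exact Finset.sum_eq_zero fun b hb => degZ_le_coe_iff.mp (h b hb) k hk

lemma cdegS_le_iff {m : Type*} [Fintype m] {u : m → ℤ} {p : m → Polynomial K} {b : WithBot ℤ} :
    cdegS u p ≤ b ↔ ∀ i, degZ (p i) + ((u i : ℤ) : WithBot ℤ) ≤ b := by
  simp [cdegS, Finset.sup_le_iff]

lemma le_cdegS {m : Type*} [Fintype m] (u : m → ℤ) (p : m → Polynomial K) (i : m) :
    degZ (p i) + ((u i : ℤ) : WithBot ℤ) ≤ cdegS u p :=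
  Finset.le_sup (f := fun i => degZ (p i) + ((u i : ℤ) : WithBot ℤ)) (Finset.mem_univ i)

lemma coeff_mul_boundary {a b : Polynomial K} {α β : ℤ} {N : ℕ}
    (ha : degZ a ≤ (α : WithBot ℤ)) (hb : degZ b ≤ (β : WithBot ℤ)) (hN : (N : ℤ) = α + β) :
    (a * b).coeff N =
      (if 0 ≤ α then a.coeff α.toNat else 0) * (if 0 ≤ β then b.coeff β.toNat else 0) := by
  by_cases hα : 0 ≤ α
  · by_cases hβ : 0 ≤ β
    · have ha' : a.natDegree ≤ α.toNat := by
        by_cases h0 : a = 0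
        · simp [h0]
        · rw [degZ_eq_natDegree h0, WithBot.coe_le_coe] at ha; omega
      have hb' : b.natDegree ≤ β.toNat := by
        by_cases h0 : b = 0
        · simp [h0]
        · rw [degZ_eq_natDegree h0, WithBot.coe_le_coe] at hb; omega
      have hN' : N = α.toNat + β.toNat := by omega
      rw [if_pos hα, if_pos hβ, hN']
      exact Polynomial.coeff_mul_add_eq_of_natDegree_le ha' hb'
    · have : b = 0 := eq_zero_of_degZ_le_neg (by omega) hb
      simp [this, hβ]
  · have : a = 0 := eq_zero_of_degZ_le_neg (by omega) ha
    simp [this, hα]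

end Helpers

/-- Predictable degree ("≥" direction): for a `u`-column reduced matrix with column degrees `v`,
each shifted degree of the input is bounded by the shifted degree of the output. -/
lemma pred_deg {m ι : Type*} [Fintype m] [Fintype ι] {u : m → ℤ} {A : Matrix m ι (Polynomial K)}
    {v : ι → ℤ} (h : IsColReducedWith u A v) (p : ι → Polynomial K) (j : ι) :
    degZ (p j) + ((v j : ℤ) : WithBot ℤ) ≤ cdegS u (A.mulVec p) := by
  by_cases hpj : p j = 0
  · simp [hpj, degZ_zero]
  -- the set of nonzero coordinates
  classical
  set S : Finset ι := Finset.univ.filter (fun c => p c ≠ 0) with hS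
  have hSne : S.Nonempty := ⟨j, by simp [hS, hpj]⟩
  set t : ℤ := S.sup' hSne (fun c => ((p c).natDegree : ℤ) + v c) with ht
  obtain ⟨j0, hj0S, hj0⟩ := S.exists_mem_eq_sup' hSne (fun c => ((p c).natDegree : ℤ) + v c)
  have hj0ne : p j0 ≠ 0 := by simpa [hS] using hj0S
  have ht_le : ∀ c, p c ≠ 0 → ((p c).natDegree : ℤ) + v c ≤ t :=
    fun c hc => Finset.le_sup' (f := fun c => ((p c).natDegree : ℤ) + v c) (Finset.mem_filter.mpr ⟨Finset.mem_univ c, hc⟩)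
  -- degree bounds
  have hA : ∀ i c, degZ (A i c) ≤ ((v c - u i : ℤ) : WithBot ℤ) := by
    intro i c
    have h1 : degZ (A i c) + ((u i : ℤ) : WithBot ℤ) ≤ cdegS u (fun i' => A i' c) :=
      Finset.le_sup (f := fun i' => degZ (A i' c) + ((u i' : ℤ) : WithBot ℤ)) (Finset.mem_univ i)
    rw [h.1 c] at h1
    exact degZ_add_coe_le_iff.mp h1
  have hp : ∀ c, degZ (p c) ≤ ((t - v c : ℤ) : WithBot ℤ) := by
    intro c
    by_cases hc : p c = 0
    · simp [hc, degZ_zero]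
    · rw [degZ_eq_natDegree hc, WithBot.coe_le_coe]
      have := ht_le c hc; omega
  -- the coefficient vector
  set lam : ι → K := fun c => if 0 ≤ t - v c then (p c).coeff (t - v c).toNat else 0 with hlam
  have hlamj0 : lam j0 ≠ 0 := by
    have h1 : 0 ≤ t - v j0 := by omega
    have h2 : (t - v j0).toNat = (p j0).natDegree := by omega
    simp only [hlam, if_pos h1, h2]
    exact Polynomial.leadingCoeff_ne_zero.mpr hj0ne
  -- full column rank gives a row with nonzero combination
  have hrow : ∃ i, ∑ c, lcoeffS u A v i c * lam c ≠ 0 := by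
    by_contra hall
    push_neg at hall
    have : ∀ c, lam c = 0 := by
      have hli := h.2
      rw [FullColRankK, Fintype.linearIndependent_iff] at hli
      refine hli lam ?_
      funext i
      rw [Finset.sum_apply]
      simpa [Pi.smul_apply, smul_eq_mul, mul_comm] using hall i
    exact hlamj0 (this j0)
  obtain ⟨i, hi⟩ := hrow
  -- t - u i is nonneg
  have hui : 0 ≤ t - u i := by
    by_contra hneg
    apply hi
    refine Finset.sum_eq_zero fun c _ => ?_
    rcases eq_or_ne (lcoeffS u A v i c) 0 with h0 | h0
    · rw [h0, zero_mul]
    · rcases eq_or_ne (lam c) 0 with h0' | h0'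
      · rw [h0', mul_zero]
      · exfalso
        have hg1 : 0 ≤ v c - u i := by
          by_contra hg; exact h0 (by simp only [lcoeffS, Matrix.of_apply, if_neg hg])
        have hg2 : 0 ≤ t - v c := by
          by_contra hg; exact h0' (by simp only [hlam, if_neg hg])
        omega
  -- the boundary coefficient computation
  have hcoeff : ((A.mulVec p) i).coeff (t - u i).toNat = ∑ c, lcoeffS u A v i c * lam c := by
    rw [Matrix.mulVec, dotProduct, Polynomial.finset_sum_coeff]
    refine Finset.sum_congr rfl fun c _ => ?_
    rw [coeff_mul_boundary (hA i c) (hp c) (by omega)]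
    simp only [lcoeffS, Matrix.of_apply, hlam]
  have hne : ((A.mulVec p) i).coeff (t - u i).toNat ≠ 0 := hcoeff ▸ hi
  have hd : ((t : ℤ) : WithBot ℤ) ≤ degZ ((A.mulVec p) i) + ((u i : ℤ) : WithBot ℤ) := by
    have := le_degZ_of_coeff_ne hne
    rw [show (((t - u i).toNat : ℕ) : ℤ) = t - u i by omega] at this
    by_cases h0 : (A.mulVec p) i = 0
    · rw [h0, degZ_zero] at this; exact absurd this (by simp)
    · rw [degZ_eq_natDegree h0, ← WithBot.coe_add, WithBot.coe_le_coe]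
      rw [degZ_eq_natDegree h0, WithBot.coe_le_coe] at this
      omega
  calc degZ (p j) + ((v j : ℤ) : WithBot ℤ)
      ≤ ((t : ℤ) : WithBot ℤ) := by
        rw [degZ_eq_natDegree hpj, ← WithBot.coe_add, WithBot.coe_le_coe]
        exact ht_le j hpj
    _ ≤ degZ ((A.mulVec p) i) + ((u i : ℤ) : WithBot ℤ) := hd
    _ ≤ cdegS u (A.mulVec p) :=
        Finset.le_sup (f := fun i => degZ ((A.mulVec p) i) + ((u i : ℤ) : WithBot ℤ))
          (Finset.mem_univ i)

lemma coeff_chunk (p : Polynomial K) (off L b : ℕ) :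
    (∑ a ∈ Finset.range L, Polynomial.C (p.coeff (off + a)) * Polynomial.X ^ a).coeff b =
      if b < L then p.coeff (off + b) else 0 := by
  rw [Polynomial.finset_sum_coeff]
  simp only [Polynomial.coeff_C_mul, Polynomial.coeff_X_pow, mul_ite, mul_one, mul_zero]
  rw [Finset.sum_ite_eq (Finset.range L) b (fun a => p.coeff (off + a))]
  simp [Finset.mem_range]

lemma degZ_chunk (p : Polynomial K) (off L : ℕ) (m : ℤ) (hm : (L : ℤ) ≤ m + 1) :
    degZ (∑ a ∈ Finset.range L, Polynomial.C (p.coeff (off + a)) * Polynomial.X ^ a) ≤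
      (m : WithBot ℤ) := by
  rw [degZ_le_coe_iff]
  intro k hk
  rw [coeff_chunk]
  have : ¬ k < L := by omega
  simp [this]

/-- Decomposition of a polynomial of degree at most `r + Q * dmax` into chunks. -/
lemma decompose (dmax : ℕ) (Q r : ℕ) (p : Polynomial K)
    (hp : degZ p ≤ (((r + Q * dmax : ℕ) : ℤ) : WithBot ℤ)) :
    ∃ c : Fin (Q + 1) → Polynomial K,
      degZ (c 0) ≤ ((r : ℤ) : WithBot ℤ) ∧
      (∀ k : Fin (Q + 1), k ≠ 0 → degZ (c k) ≤ ((dmax : ℤ) : WithBot ℤ)) ∧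
      p = ∑ k : Fin (Q + 1),
        (if k = (0 : Fin (Q + 1)) then 1
          else Polynomial.X ^ (r + ((k : ℕ) - 1) * dmax)) * c k := by
  induction Q generalizing p with
  | zero =>
    refine ⟨fun _ => p, by simpa using hp,
      fun k hk => absurd (Fin.val_injective (by have := k.isLt; omega : (k : ℕ) = ((0 : Fin 1) : ℕ))) hk, ?_⟩
    simp
  | succ Q ih =>
    set off : ℕ := r + Q * dmax with hoff
    set top : Polynomial K :=
      ∑ a ∈ Finset.range (dmax + 1), Polynomial.C (p.coeff (off + a)) * Polynomial.X ^ a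
      with htop
    set p' : Polynomial K := p - Polynomial.X ^ off * top with hp'
    have hp'deg : degZ p' ≤ (((r + Q * dmax : ℕ) : ℤ) : WithBot ℤ) := by
      rw [degZ_le_coe_iff]
      intro k hk
      have hofflek : off ≤ k := by omega
      rw [hp', Polynomial.coeff_sub, Polynomial.coeff_X_pow_mul' top off k, if_pos hofflek,
        htop, coeff_chunk]
      by_cases hcase : k - off < dmax + 1
      · rw [if_pos hcase]
        have : off + (k - off) = k := by omega
        rw [this, sub_self]
      · rw [if_neg hcase]
        have : p.coeff k = 0 := by
          rw [degZ_le_coe_iff] at hp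
          have hkk : r + (Q + 1) * dmax < k := by
            have h1 : (Q + 1) * dmax = Q * dmax + dmax := by ring
            omega
          exact hp k (by exact_mod_cast hkk)
        rw [this, sub_zero]
    obtain ⟨c', hc0, hck, hsum⟩ := ih p' hp'deg
    refine ⟨Fin.snoc c' top, ?_, ?_, ?_⟩
    · have h0 : (0 : Fin (Q + 2)) = Fin.castSucc (0 : Fin (Q + 1)) := rfl
      rw [h0, Fin.snoc_castSucc]
      exact hc0
    · intro k hk
      induction k using Fin.lastCases with
      | last =>
        rw [Fin.snoc_last]
        exact degZ_chunk p off (dmax + 1) dmax (by push_cast; omega)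
      | cast k' =>
        rw [Fin.snoc_castSucc]
        refine hck k' fun h0 => hk ?_
        rw [h0]; rfl
    · rw [Fin.sum_univ_castSucc]
      have hlast : ((Fin.last (Q + 1) : Fin (Q + 2)) : ℕ) = Q + 1 := rfl
      have hlastne : (Fin.last (Q + 1) : Fin (Q + 2)) ≠ 0 := by
        simp [Fin.ext_iff]
      rw [if_neg hlastne, Fin.snoc_last, hlast]
      have hexp : r + (Q + 1 - 1) * dmax = off := by simp [hoff]
      rw [hexp]
      have hcast : ∀ k : Fin (Q + 1),
          (if Fin.castSucc k = (0 : Fin (Q + 2)) then (1 : Polynomial K)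
            else Polynomial.X ^ (r + ((Fin.castSucc k : ℕ) - 1) * dmax)) * (Fin.snoc c' top : Fin (Q + 2) → Polynomial K) (Fin.castSucc k)
          = (if k = (0 : Fin (Q + 1)) then 1
            else Polynomial.X ^ (r + ((k : ℕ) - 1) * dmax)) * c' k := by
        intro k
        rw [Fin.snoc_castSucc]
        congr 1
        have : (Fin.castSucc k = (0 : Fin (Q + 2))) ↔ (k = (0 : Fin (Q + 1))) := by
          simp only [Fin.ext_iff, Fin.coe_castSucc, Fin.val_zero]
        simp only [Fin.coe_castSucc]
        by_cases h0 : k = 0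
        · rw [if_pos (this.mpr h0), if_pos h0]
        · rw [if_neg (fun h => h0 (this.mp h)), if_neg h0]
      rw [Finset.sum_congr rfl (fun k _ => hcast k), ← hsum, hp']
      ring

/-- Lower bound: a nonzero element of the column module of a Hermite-form matrix has
`-s`-shifted column degree at least `0`. -/
lemma hermite_mulVec_lb {n : ℕ} {H : Matrix (Fin n) (Fin n) (Polynomial K)}
    (hlow : ∀ i j : Fin n, i < j → H i j = 0) (hmon : ∀ i : Fin n, (H i i).Monic)
    (hdeg : ∀ i j : Fin n, j < i → (H i j).degree < (H i i).degree)
    {s : Fin n → ℕ} (hsdef : ∀ i, s i = (H i i).natDegree)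
    {w : Fin n → Polynomial K} (hw : ∃ j, w j ≠ 0) :
    ((0 : ℤ) : WithBot ℤ) ≤ cdegS (fun i => -(s i : ℤ)) (H.mulVec w) := by
  classical
  obtain ⟨j0, hj0⟩ := hw
  set S : Finset (Fin n) := Finset.univ.filter (fun c => w c ≠ 0) with hS
  have hSne : S.Nonempty := ⟨j0, Finset.mem_filter.mpr ⟨Finset.mem_univ _, hj0⟩⟩
  obtain ⟨i, hiS, hi⟩ := S.exists_mem_eq_sup' hSne (fun c => (w c).natDegree)
  set t : ℕ := S.sup' hSne (fun c => (w c).natDegree) with ht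
  have hwi : w i ≠ 0 := by simpa [hS] using hiS
  have hwit : (w i).natDegree = t := hi.symm
  have ht_le : ∀ c, w c ≠ 0 → (w c).natDegree ≤ t :=
    fun c hc => Finset.le_sup' (f := fun c => (w c).natDegree)
      (Finset.mem_filter.mpr ⟨Finset.mem_univ _, hc⟩)
  have hcoeff : ((H.mulVec w) i).coeff (s i + t) = (w i).coeff t := by
    rw [Matrix.mulVec, dotProduct, Polynomial.finset_sum_coeff]
    rw [Finset.sum_eq_single i]
    · rw [hsdef i, ← hwit,
        Polynomial.coeff_mul_add_eq_of_natDegree_le le_rfl le_rfl,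
        (hmon i).coeff_natDegree, one_mul]
    · intro j _ hji
      rcases lt_or_gt_of_ne hji with hlt | hgt
      · -- j < i
        by_cases hwj : w j = 0
        · simp [hwj]
        by_cases hHij : H i j = 0
        · simp [hHij]
        have h1 : (H i j).natDegree < s i := by
          rw [hsdef i]
          exact Polynomial.natDegree_lt_natDegree hHij (hdeg i j hlt)
        refine Polynomial.coeff_eq_zero_of_natDegree_lt ?_
        calc (H i j * w j).natDegree ≤ (H i j).natDegree + (w j).natDegree :=
              Polynomial.natDegree_mul_le
          _ < s i + t := by have := ht_le j hwj; omega
      · -- i < j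
        rw [hlow i j hgt, zero_mul, Polynomial.coeff_zero]
    · intro h; exact absurd (Finset.mem_univ i) h
  have hne : ((H.mulVec w) i).coeff (s i + t) ≠ 0 := by
    rw [hcoeff, ← hwit]
    exact Polynomial.leadingCoeff_ne_zero.mpr hwi
  have h1 : (((s i + t : ℕ) : ℤ) : WithBot ℤ) ≤ degZ ((H.mulVec w) i) :=
    le_degZ_of_coeff_ne hne
  have h0 : (H.mulVec w) i ≠ 0 := fun hz => hne (by rw [hz]; simp)
  calc ((0 : ℤ) : WithBot ℤ)
      ≤ degZ ((H.mulVec w) i) + (((-(s i : ℤ)) : ℤ) : WithBot ℤ) := by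
        rw [degZ_eq_natDegree h0, ← WithBot.coe_add, WithBot.coe_le_coe]
        rw [degZ_eq_natDegree h0, WithBot.coe_le_coe] at h1
        push_cast at h1 ⊢
        omega
    _ ≤ cdegS (fun i => -(s i : ℤ)) (H.mulVec w) :=
        Finset.le_sup (f := fun i => degZ ((H.mulVec w) i) + (((-(s i : ℤ)) : ℤ) : WithBot ℤ))
          (Finset.mem_univ i)

/-- Lemma 6: with `E` the degree-expansion matrix and `s*` the expanded
shift, if `N = [N_u; N_d]` is a `[-u,-s*]`-minimal kernel basis of `[F, -E]` and `N̄` consists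
of the columns of `N_d` of `-s*`-column degree at most `0` (here: the other columns are zeroed
out), then the Hermite normal form `H` of `F` is a column basis of `E·N̄`, and the nonzero
columns of `E·N̄` have `-s`-column degree `0`.  Columns of `E` are indexed by the sigma type
`(i : Fin n) × Fin (q i + 1)`, of cardinality `n̄ = n + Σ q_i`. -/
theorem hermite_from_expanded_kernel_basis {n : ℕ}
    (F H : Matrix (Fin n) (Fin n) (Polynomial K)) (d : Fin n → ℕ)
    (hFns : F.det ≠ 0) (hFcr : IsColReducedNat F d)
    (hH : IsHermiteFormOf F H)
    (dmax : ℕ) (hdmax : dmax = Finset.univ.sup d) (hd1 : 1 ≤ dmax)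
    (s : Fin n → ℕ) (hs : ∀ i, s i = (H i i).natDegree)
    (smax : ℕ) (hsmax : smax = Finset.univ.sup s)
    (q r : Fin n → ℕ) (hq : ∀ i, q i = s i / dmax) (hr : ∀ i, r i = s i % dmax)
    (E : Matrix (Fin n) ((i : Fin n) × Fin (q i + 1)) (Polynomial K))
    (hE : ∀ (a : Fin n) (c : (i : Fin n) × Fin (q i + 1)),
      E a c = if a = c.1 then
          (if c.2 = (0 : Fin (q c.1 + 1)) then 1
            else Polynomial.X ^ (r c.1 + ((c.2 : ℕ) - 1) * dmax))
        else 0)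
    (sstar : ((i : Fin n) × Fin (q i + 1)) → ℤ)
    (hsstar : ∀ c, sstar c =
      if c.2 = (0 : Fin (q c.1 + 1)) then (r c.1 : ℤ) else (dmax : ℤ))
    (Nu : Matrix (Fin n) ((i : Fin n) × Fin (q i + 1)) (Polynomial K))
    (Nd : Matrix ((i : Fin n) × Fin (q i + 1)) ((i : Fin n) × Fin (q i + 1)) (Polynomial K))
    (hN : IsMinimalKernelBasis (fromCols F (-E))
      (Sum.elim (fun _ : Fin n => -(smax : ℤ)) (fun c => -(sstar c)))
      (fromRows Nu Nd))
    (Nbar : Matrix ((i : Fin n) × Fin (q i + 1)) ((i : Fin n) × Fin (q i + 1)) (Polynomial K))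
    (hNbar : ∀ a c, Nbar a c =
      if cdegS (fun b => -(sstar b)) (fun b => Nd b c) ≤ (0 : WithBot ℤ) then Nd a c else 0) :
    IsColBasis (E * Nbar) H ∧
    ∀ c, (∃ a, (E * Nbar) a c ≠ 0) →
      cdegS (fun i : Fin n => -(s i : ℤ)) (fun a => (E * Nbar) a c) = (0 : WithBot ℤ) := by
  
  classical
  obtain ⟨⟨hHtri, hHmon, hHdeg2⟩, U, hUdet, hFU⟩ := hH
  obtain ⟨⟨hNli, hNker, hNgen⟩, v, hNred⟩ := hN
  -- basic degree facts
  have hHdegZ : ∀ a i : Fin n, degZ (H a i) ≤ ((s a : ℤ) : WithBot ℤ) := by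
    intro a i
    rcases lt_trichotomy a i with hlt | heq | hgt
    · rw [hHtri a i hlt, degZ_zero]; exact bot_le
    · subst heq
      rw [degZ_eq_natDegree (hHmon a).ne_zero, WithBot.coe_le_coe, hs a]
    · calc degZ (H a i) ≤ degZ (H a a) := degZ_le_degZ (le_of_lt (hHdeg2 a i hgt))
        _ = ((s a : ℤ) : WithBot ℤ) := by
            rw [degZ_eq_natDegree (hHmon a).ne_zero, hs a]
  have hsle : ∀ a : Fin n, s a ≤ smax := fun a => hsmax ▸ Finset.le_sup (Finset.mem_univ a)
  have hsplit : ∀ j : Fin n, r j + q j * dmax = s j := by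
    intro j; rw [hq j, hr j]; exact Nat.mod_add_div' (s j) dmax
  have hzero : (0 : WithBot ℤ) = (((0 : ℤ)) : WithBot ℤ) := rfl
  -- kernel identity  F * Nu = E * Nd
  rw [fromCols_mul_fromRows, Matrix.neg_mul, add_neg_eq_zero] at hNker
  -- the selected-columns condition
  set cond : ((i : Fin n) × Fin (q i + 1)) → Prop :=
    fun c => cdegS (fun b => -(sstar b)) (fun b => Nd b c) ≤ (0 : WithBot ℤ) with hcond
  have hNbar_pos : ∀ c, cond c → (∀ a, Nbar a c = Nd a c) := fun c hc a => by
    rw [hNbar, if_pos hc]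
  have hNbar_neg : ∀ c, ¬ cond c → (∀ a, Nbar a c = 0) := fun c hc a => by
    rw [hNbar, if_neg hc]
  set Nu' : Matrix (Fin n) ((i : Fin n) × Fin (q i + 1)) (Polynomial K) :=
    Matrix.of (fun a c => if cond c then Nu a c else 0) with hNu'
  have hA : E * Nbar = F * Nu' := by
    refine Matrix.ext fun a c => ?_
    by_cases hc : cond c
    · calc (E * Nbar) a c = (E * Nd) a c := by
            simp only [Matrix.mul_apply]
            exact Finset.sum_congr rfl fun b _ => by rw [hNbar_pos c hc b]
        _ = (F * Nu) a c := by rw [← hNker]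
        _ = (F * Nu') a c := by
            simp only [Matrix.mul_apply]
            exact Finset.sum_congr rfl fun b _ => by
              rw [hNu', Matrix.of_apply, if_pos hc]
    · calc (E * Nbar) a c = 0 := by
            simp only [Matrix.mul_apply]
            exact Finset.sum_eq_zero fun b _ => by rw [hNbar_neg c hc b, mul_zero]
        _ = (F * Nu') a c := by
            simp only [Matrix.mul_apply]
            exact (Finset.sum_eq_zero fun b _ => by
              rw [hNu', Matrix.of_apply, if_neg hc, mul_zero]).symm
  have hUU : U * U⁻¹ = 1 := Matrix.mul_nonsing_inv U hUdet
  have hFH : F = H * U⁻¹ := by rw [← hFU, Matrix.mul_assoc, hUU, Matrix.mul_one]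
  set W : Matrix (Fin n) ((i : Fin n) × Fin (q i + 1)) (Polynomial K) := U⁻¹ * Nu' with hW
  have hA2 : E * Nbar = H * W := by rw [hA, hFH, Matrix.mul_assoc]
  -- sums over the sigma type
  have hsig : ∀ g : ((i : Fin n) × Fin (q i + 1)) → Polynomial K,
      ∑ c, g c = ∑ j : Fin n, ∑ k : Fin (q j + 1), g ⟨j, k⟩ := by
    intro g; rw [← Finset.sum_sigma]; rfl
  -- generation of the columns of H
  have hGen : ∀ i0 : Fin n, ∃ pp : ((i : Fin n) × Fin (q i + 1)) → Polynomial K,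
      (E * Nbar).mulVec pp = fun a => H a i0 := by
    intro i0
    set u0 : Fin n → Polynomial K := fun j => U j i0 with hu0
    have hFu : F.mulVec u0 = fun a => H a i0 := by
      funext a
      rw [← hFU]
      simp [Matrix.mulVec, dotProduct, Matrix.mul_apply, hu0]
    have hdec : ∀ j : Fin n, ∃ c : Fin (q j + 1) → Polynomial K,
        degZ (c 0) ≤ ((r j : ℤ) : WithBot ℤ) ∧
        (∀ k : Fin (q j + 1), k ≠ 0 → degZ (c k) ≤ ((dmax : ℤ) : WithBot ℤ)) ∧
        H j i0 = ∑ k : Fin (q j + 1),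
          (if k = (0 : Fin (q j + 1)) then 1
            else Polynomial.X ^ (r j + ((k : ℕ) - 1) * dmax)) * c k := by
      intro j
      refine decompose dmax (q j) (r j) (H j i0) ?_
      rw [hsplit j]
      exact hHdegZ j i0
    choose t ht0 htk htsum using hdec
    set tv : ((i : Fin n) × Fin (q i + 1)) → Polynomial K := fun c => t c.1 c.2 with htv
    have hEt : E.mulVec tv = fun a => H a i0 := by
      funext a
      show ∑ c, E a c * tv c = H a i0
      rw [hsig (fun c => E a c * tv c), Finset.sum_eq_single a]
      · rw [htsum a]
        refine Finset.sum_congr rfl fun k _ => ?_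
        rw [hE a ⟨a, k⟩, if_pos rfl]
      · intro j _ hja
        exact Finset.sum_eq_zero fun k _ => by rw [hE a ⟨j, k⟩, if_neg (Ne.symm hja), zero_mul]
      · intro h; exact absurd (Finset.mem_univ a) h
    have hker : (fromCols F (-E)).mulVec (Sum.elim u0 tv) = 0 := by
      rw [fromCols_mulVec_sumElim, Matrix.neg_mulVec, hFu, hEt]
      exact add_neg_cancel _
    obtain ⟨pvec, hpvec⟩ := hNgen (Sum.elim u0 tv) hker
    have hsplit2 : Sum.elim (Nu.mulVec pvec) (Nd.mulVec pvec) = Sum.elim u0 tv := by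
      rw [← fromRows_mulVec]; exact hpvec
    have hNup : Nu.mulVec pvec = u0 := funext fun j => congrFun hsplit2 (Sum.inl j)
    have hNdp : Nd.mulVec pvec = tv := funext fun j => congrFun hsplit2 (Sum.inr j)
    -- degree bound on the kernel element
    have hκdeg : cdegS (Sum.elim (fun _ : Fin n => -(smax : ℤ)) fun c => -(sstar c))
        (Sum.elim u0 tv) ≤ (0 : WithBot ℤ) := by
      rw [cdegS_le_iff]
      rintro (j | c)
      · have h1 : degZ (u0 j) + ((d j : ℤ) : WithBot ℤ) ≤ ((smax : ℤ) : WithBot ℤ) := by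
          refine le_trans (pred_deg hFcr u0 j) ?_
          rw [cdegS_le_iff]
          intro a
          have h2 : degZ ((F.mulVec u0) a) ≤ ((smax : ℤ) : WithBot ℤ) := by
            rw [hFu]
            exact (hHdegZ a i0).trans (degZ_coe_mono (by exact_mod_cast hsle a))
          calc degZ ((F.mulVec u0) a) + (((0 : ℤ)) : WithBot ℤ)
              = degZ ((F.mulVec u0) a) := by rw [← hzero, add_zero]
            _ ≤ _ := h2
        show degZ (u0 j) + (((-(smax : ℤ)) : ℤ) : WithBot ℤ) ≤ (0 : WithBot ℤ)
        rw [hzero, degZ_add_coe_le_iff]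
        rw [degZ_add_coe_le_iff] at h1
        refine h1.trans (degZ_coe_mono ?_)
        have : (0 : ℤ) ≤ (d j : ℤ) := by positivity
        omega
      · show degZ (tv c) + (((-(sstar c)) : ℤ) : WithBot ℤ) ≤ (0 : WithBot ℤ)
        rw [hzero, degZ_add_coe_le_iff]
        have heq : (0 - -(sstar c) : ℤ) = sstar c := by ring
        rw [heq]
        obtain ⟨j, k⟩ := c
        rw [hsstar ⟨j, k⟩]
        by_cases hk : k = (0 : Fin (q j + 1))
        · rw [if_pos hk]
          show degZ (t j k) ≤ _
          rw [hk]
          exact ht0 j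
        · rw [if_neg hk]
          exact htk j k hk
    -- minimality forces selected columns
    have hvle : ∀ c, pvec c ≠ 0 → cond c := by
      intro c hc
      have h1 : degZ (pvec c) + ((v c : ℤ) : WithBot ℤ) ≤ (0 : WithBot ℤ) := by
        have h2 := pred_deg hNred pvec c
        rw [hpvec] at h2
        exact h2.trans hκdeg
      have h2 : (v c : ℤ) ≤ 0 := by
        rw [degZ_eq_natDegree hc, ← WithBot.coe_add, hzero, WithBot.coe_le_coe] at h1
        have : (0 : ℤ) ≤ ((pvec c).natDegree : ℤ) := by positivity
        omega
      show cdegS (fun b => -(sstar b)) (fun b => Nd b c) ≤ (0 : WithBot ℤ)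
      rw [cdegS_le_iff]
      intro b
      have h3 := le_cdegS (Sum.elim (fun _ : Fin n => -(smax : ℤ)) fun c => -(sstar c))
        (fun z => (fromRows Nu Nd) z c) (Sum.inr b)
      rw [hNred.1 c] at h3
      have h4 : degZ (Nd b c) + (((-(sstar b)) : ℤ) : WithBot ℤ) ≤ ((v c : ℤ) : WithBot ℤ) := h3
      exact h4.trans ((degZ_coe_mono h2).trans_eq hzero.symm)
    have hbar : Nbar.mulVec pvec = Nd.mulVec pvec := by
      funext a
      show ∑ c, Nbar a c * pvec c = ∑ c, Nd a c * pvec c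
      refine Finset.sum_congr rfl fun c _ => ?_
      by_cases hc : pvec c = 0
      · rw [hc, mul_zero, mul_zero]
      · rw [hNbar_pos c (hvle c hc) a]
    refine ⟨pvec, ?_⟩
    rw [← Matrix.mulVec_mulVec, hbar, Matrix.mulVec_mulVec, ← hNker,
      ← Matrix.mulVec_mulVec, hNup, hFu]
  -- linear independence of the columns of H
  have hHdet : H.det ≠ 0 := by
    rw [← hFU, Matrix.det_mul]
    exact mul_ne_zero hFns hUdet.ne_zero
  have hHli : LinearIndependent (Polynomial K) fun j => fun i => H i j := by
    rw [Fintype.linearIndependent_iff]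
    intro g hg j
    have hmv : H.mulVec g = 0 := by
      funext a
      have h1 := congrFun hg a
      simpa [Matrix.mulVec, dotProduct, Finset.sum_apply, mul_comm] using h1
    have h2 : H.det • g = 0 := by
      have h3 := congrArg (fun x => (Matrix.adjugate H).mulVec x) hmv
      simpa [Matrix.mulVec_mulVec, Matrix.adjugate_mul, Matrix.smul_mulVec,
        Matrix.one_mulVec, Matrix.mulVec_zero] using h3
    have h4 := congrFun h2 j
    simp only [Pi.smul_apply, smul_eq_mul, Pi.zero_apply] at h4
    exact (mul_eq_zero.mp h4).resolve_left hHdet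
  choose P hP using hGen
  have hiff : ∀ g : Fin n → Polynomial K,
      (∃ p, (E * Nbar).mulVec p = g) ↔ (∃ p, H.mulVec p = g) := by
    intro g
    constructor
    · rintro ⟨p, rfl⟩
      exact ⟨W.mulVec p, by rw [Matrix.mulVec_mulVec, ← hA2]⟩
    · rintro ⟨p, rfl⟩
      refine ⟨fun c => ∑ i0, p i0 * P i0 c, ?_⟩
      funext a
      show ∑ c, (E * Nbar) a c * (∑ i0, p i0 * P i0 c) = (H.mulVec p) a
      calc ∑ c, (E * Nbar) a c * ∑ i0, p i0 * P i0 c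
          = ∑ c, ∑ i0, p i0 * ((E * Nbar) a c * P i0 c) := by
            refine Finset.sum_congr rfl fun c _ => ?_
            rw [Finset.mul_sum]
            exact Finset.sum_congr rfl fun i0 _ => by ring
        _ = ∑ i0, ∑ c, p i0 * ((E * Nbar) a c * P i0 c) := Finset.sum_comm
        _ = ∑ i0, p i0 * H a i0 := by
            refine Finset.sum_congr rfl fun i0 _ => ?_
            rw [← Finset.mul_sum]
            congr 1
            have h1 := congrFun (hP i0) a
            exact h1
        _ = (H.mulVec p) a := by
            simp [Matrix.mulVec, dotProduct, mul_comm]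
  refine ⟨⟨hHli, hiff⟩, ?_⟩
  -- second part: degrees of the nonzero columns
  intro c hc
  have hcnd : cond c := by
    by_contra hnc
    obtain ⟨a, ha⟩ := hc
    apply ha
    show ∑ b, E a b * Nbar b c = 0
    exact Finset.sum_eq_zero fun b _ => by rw [hNbar_neg c hnc b, mul_zero]
  have hdN : ∀ b, degZ (Nd b c) ≤ ((sstar b : ℤ) : WithBot ℤ) := by
    intro b
    have h1 := cdegS_le_iff.mp hcnd b
    rw [hzero, degZ_add_coe_le_iff] at h1
    refine h1.trans (degZ_coe_mono (by omega))
  have hub : cdegS (fun i : Fin n => -(s i : ℤ)) (fun a => (E * Nbar) a c) ≤ (0 : WithBot ℤ) := by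
    rw [cdegS_le_iff]
    intro a
    rw [hzero, degZ_add_coe_le_iff]
    have hgoal : degZ ((E * Nbar) a c) ≤ ((s a : ℤ) : WithBot ℤ) := by
      have hentry : (E * Nbar) a c = ∑ b, E a b * Nd b c := by
        show ∑ b, E a b * Nbar b c = _
        exact Finset.sum_congr rfl fun b _ => by rw [hNbar_pos c hcnd b]
      rw [hentry]
      refine degZ_sum_le fun b _ => ?_
      obtain ⟨j, k⟩ := b
      rw [hE a ⟨j, k⟩]
      by_cases hja : a = j
      · rw [if_pos hja]
        subst hja
        by_cases hk : k = (0 : Fin (q a + 1))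
        · rw [if_pos hk, one_mul]
          refine (hdN ⟨a, k⟩).trans (degZ_coe_mono ?_)
          rw [hsstar ⟨a, k⟩, if_pos hk]
          have h5 := hsplit a
          exact_mod_cast Nat.le.intro h5
        · rw [if_neg hk]
          have hsst : (sstar ⟨a, k⟩ : ℤ) = (dmax : ℤ) := by rw [hsstar ⟨a, k⟩, if_neg hk]
          have h2 := degZ_X_pow_mul_le (e := r a + ((k : ℕ) - 1) * dmax)
            ((hdN ⟨a, k⟩).trans (degZ_coe_mono (le_of_eq hsst)))
          refine h2.trans (degZ_coe_mono ?_)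
          have h3 : (k : ℕ) ≤ q a := Nat.lt_succ_iff.mp k.isLt
          have h4 : 1 ≤ (k : ℕ) := by
            rcases Nat.eq_zero_or_pos (k : ℕ) with h0 | h0
            · exact absurd (Fin.ext (by simpa using h0) : k = (0 : Fin (q a + 1))) hk
            · exact h0
          have h5 : ((k : ℕ) - 1) * dmax + dmax = (k : ℕ) * dmax := by
            have : ((k : ℕ) - 1) + 1 = (k : ℕ) := by omega
            calc ((k : ℕ) - 1) * dmax + dmax = (((k : ℕ) - 1) + 1) * dmax := by ring
              _ = (k : ℕ) * dmax := by rw [this]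
          have h6 : (k : ℕ) * dmax ≤ q a * dmax := Nat.mul_le_mul_right dmax h3
          have h7 := hsplit a
          push_cast
          omega
      · rw [if_neg hja, zero_mul, degZ_zero]; exact bot_le
    refine hgoal.trans (degZ_coe_mono (by omega))
  have hw : ∃ j, W j c ≠ 0 := by
    by_contra hno
    push_neg at hno
    obtain ⟨a, ha⟩ := hc
    apply ha
    rw [hA2]
    show ∑ j, H a j * W j c = 0
    exact Finset.sum_eq_zero fun j _ => by rw [hno j, mul_zero]
  have hlb := hermite_mulVec_lb hHtri hHmon hHdeg2 hs (w := fun j => W j c) hw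
  have hcol : H.mulVec (fun j => W j c) = fun a => (E * Nbar) a c := by
    funext a
    rw [hA2]
    simp [Matrix.mulVec, dotProduct, Matrix.mul_apply]
  rw [hcol] at hlb
  exact le_antisymm hub (hzero ▸ hlb)
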